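/- arXiv:2212.14391 — 2 statements merged into one kernel-verified Lean document; each statement's English description precedes it below -/
import Mathlib

section
/- Let ψ ∈ C²(Q̄) be real-valued with ∇_xψ(t,x) ≠ 0 on Q̄, and for λ > 0 set φ(t,x) = e^{λψ(t,x)}/t. Then there exist λ₀ > 0 and C > 0 such that for every λ ≥ λ₀, every (t,x) ∈ Q and every τ > 0, 4τ²λ³φ³ Σ_{m,m̃,k,ℓ=1}^n a_{mk}a_{m̃ℓ} ∂_{x_m}ψ ∂_{x_{m̃}}ψ ∂²_{x_kx_ℓ}ψ + 4τ²λ⁴φ³ a(t,x,∇ψ,∇ψ)² + 2τ²λ³φ³ Σ_{m,k=1}^n a_{mk} ∂_{x_m}ψ a_{(k)}(t,x,∇ψ,∇ψ) ≥ C τ² λ² φ³; that is, the part of q_α that is quadratic in τ dominates Cτ²λ²φ³ for all sufficiently large λ. -/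
open Real

/-- Partial derivative along the `k`-th coordinate of a function on `ℝⁿ`. -/
noncomputable def pd {n : ℕ} {E : Type*} [NormedAddCommGroup E] [NormedSpace ℝ E]
    (k : Fin n) (F : (Fin n → ℝ) → E) (x : Fin n → ℝ) : E :=
  fderiv ℝ F x (Pi.single k 1)

/-- The quadratic form `a(t,x,u,v) = Σ_{k,j} a_{kj}(t,x) u_k v_j`. -/
noncomputable def aF {n : ℕ} (a : Fin n → Fin n → ℝ → (Fin n → ℝ) → ℝ)
    (t : ℝ) (x u v : Fin n → ℝ) : ℝ :=
  ∑ k, ∑ j, a k j t x * u k * v j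

/-- The derived quadratic form `a_{(p)}(t,x,u,v) = Σ_{k,j} ∂_{x_p} a_{kj}(t,x) u_k v_j`. -/
noncomputable def aD {n : ℕ} (a : Fin n → Fin n → ℝ → (Fin n → ℝ) → ℝ)
    (p : Fin n) (t : ℝ) (x u v : Fin n → ℝ) : ℝ :=
  ∑ k, ∑ j, pd p (fun y => a k j t y) x * u k * v j

/-- Spatial gradient. -/
noncomputable def gradx {n : ℕ} (ψ : ℝ → (Fin n → ℝ) → ℝ) (t : ℝ) (x : Fin n → ℝ) :
    Fin n → ℝ :=
  fun k => pd k (ψ t) x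

/-- Spatial Hessian entry `∂²_{x_k x_ℓ} ψ`. -/
noncomputable def hessx {n : ℕ} (ψ : ℝ → (Fin n → ℝ) → ℝ) (t : ℝ) (x : Fin n → ℝ)
    (k l : Fin n) : ℝ :=
  pd l (fun y => pd k (ψ t) y) x

/-- The symbol `q_Ψ(t,x,ξ',τ)`. -/
noncomputable def qSym {n : ℕ} (a : Fin n → Fin n → ℝ → (Fin n → ℝ) → ℝ)
    (Ψ : ℝ → (Fin n → ℝ) → ℝ) (t : ℝ) (x ξ : Fin n → ℝ) (τ : ℝ) : ℝ :=
  4 * ∑ m, ∑ m', ∑ k, ∑ l, a m k t x * a m' l t x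
      * (ξ m * ξ m' + τ ^ 2 * gradx Ψ t x m * gradx Ψ t x m') * hessx Ψ t x k l
  - 2 * ∑ m, ∑ k, a m k t x * gradx Ψ t x m
      * (aD a k t x ξ ξ - τ ^ 2 * aD a k t x (gradx Ψ t x) (gradx Ψ t x))
  + 4 * ∑ m, ∑ k, a m k t x * ξ m * aD a k t x ξ (gradx Ψ t x)

lemma pd_slice {n : ℕ} (H : ℝ × (Fin n → ℝ) → ℝ) {t : ℝ} {x : Fin n → ℝ}
    (hH : DifferentiableAt ℝ H (t, x)) (k : Fin n) :
    pd k (fun y => H (t, y)) x = fderiv ℝ H (t, x) ((0 : ℝ), Pi.single k 1) := by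
  have hg : HasFDerivAt (fun y : Fin n → ℝ => ((t : ℝ), y))
      (ContinuousLinearMap.prod (0 : (Fin n → ℝ) →L[ℝ] ℝ) (ContinuousLinearMap.id ℝ _)) x :=
    HasFDerivAt.prodMk (hasFDerivAt_const t x) (hasFDerivAt_id x)
  have h2 : HasFDerivAt (fun y => H (t, y))
      ((fderiv ℝ H (t, x)).comp
        (ContinuousLinearMap.prod 0 (ContinuousLinearMap.id ℝ (Fin n → ℝ)))) x :=
    hH.hasFDerivAt.comp x hg
  unfold pd
  rw [h2.fderiv]
  rfl

set_option maxHeartbeats 1000000 in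
theorem statement4
    (n : ℕ) (Ω : Set (Fin n → ℝ)) (hΩ : Bornology.IsBounded Ω) (T : ℝ) (hT : 0 < T)
    (a : Fin n → Fin n → ℝ → (Fin n → ℝ) → ℝ)
    (ha_symm : ∀ k j, a k j = a j k)
    (ha_reg : ∀ k j, ContDiff ℝ 1 (fun p : ℝ × (Fin n → ℝ) => a k j p.1 p.2))
    (β : ℝ) (hβ : 0 < β)
    (ha_ell : ∀ t ∈ Set.Ioo (0:ℝ) T, ∀ x ∈ Ω, ∀ η : Fin n → ℝ,
      β * ∑ i, η i ^ 2 ≤ ∑ k, ∑ j, a k j t x * η k * η j)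
    (ψ : ℝ → (Fin n → ℝ) → ℝ)
    (hψ : ContDiff ℝ 2 (fun p : ℝ × (Fin n → ℝ) => ψ p.1 p.2))
    (hgrad : ∀ t ∈ Set.Icc (0:ℝ) T, ∀ x ∈ closure Ω, gradx ψ t x ≠ 0) :
    ∃ lam₀ > (0:ℝ), ∃ C > (0:ℝ), ∀ lam ≥ lam₀, ∀ t ∈ Set.Ioo (0:ℝ) T, ∀ x ∈ Ω,
      ∀ τ > (0:ℝ),
      C * τ ^ 2 * lam ^ 2 * (Real.exp (lam * ψ t x) / t) ^ 3 ≤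
        4 * τ ^ 2 * lam ^ 3 * (Real.exp (lam * ψ t x) / t) ^ 3
            * ∑ m, ∑ m', ∑ k, ∑ l, a m k t x * a m' l t x
                * gradx ψ t x m * gradx ψ t x m' * hessx ψ t x k l
        + 4 * τ ^ 2 * lam ^ 4 * (Real.exp (lam * ψ t x) / t) ^ 3
            * aF a t x (gradx ψ t x) (gradx ψ t x) ^ 2
        + 2 * τ ^ 2 * lam ^ 3 * (Real.exp (lam * ψ t x) / t) ^ 3
            * ∑ m, ∑ k, a m k t x * gradx ψ t x m
                * aD a k t x (gradx ψ t x) (gradx ψ t x) := by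
  classical
  rcases Set.eq_empty_or_nonempty Ω with hΩe | hΩne
  · exact ⟨1, one_pos, 1, one_pos, fun lam _ t _ x hx => absurd hx (by simp [hΩe])⟩
  obtain ⟨x₀, hx₀⟩ := hΩne
  have hF2 : ContDiff ℝ 2 (fun p : ℝ × (Fin n → ℝ) => ψ p.1 p.2) := hψ
  have hFd : Differentiable ℝ (fun p : ℝ × (Fin n → ℝ) => ψ p.1 p.2) :=
    hF2.differentiable (by norm_num)
  have hgrad_eq : ∀ (t : ℝ) (x : Fin n → ℝ) (k : Fin n),
      gradx ψ t x k
        = fderiv ℝ (fun p : ℝ × (Fin n → ℝ) => ψ p.1 p.2) (t, x) ((0 : ℝ), Pi.single k 1) := by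
    intro t x k
    have := pd_slice (fun p : ℝ × (Fin n → ℝ) => ψ p.1 p.2) (hFd (t, x)) k
    simpa [gradx] using this
  have hgradc : ∀ k : Fin n,
      Continuous fun p : ℝ × (Fin n → ℝ) => gradx ψ p.1 p.2 k := by
    intro k
    have hc : Continuous fun p : ℝ × (Fin n → ℝ) =>
        fderiv ℝ (fun q : ℝ × (Fin n → ℝ) => ψ q.1 q.2) p ((0 : ℝ), Pi.single k 1) :=
      ((hF2.fderiv_right (m := 1) (by norm_num)).clm_apply contDiff_const).continuous
    have he : (fun p : ℝ × (Fin n → ℝ) => gradx ψ p.1 p.2 k)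
        = fun p : ℝ × (Fin n → ℝ) =>
            fderiv ℝ (fun q : ℝ × (Fin n → ℝ) => ψ q.1 q.2) p ((0 : ℝ), Pi.single k 1) := by
      funext p; rw [hgrad_eq p.1 p.2 k]
    rw [he]; exact hc
  have hG1 : ∀ k : Fin n, ContDiff ℝ 1 (fun p : ℝ × (Fin n → ℝ) =>
      fderiv ℝ (fun q : ℝ × (Fin n → ℝ) => ψ q.1 q.2) p ((0 : ℝ), Pi.single k 1)) := fun k =>
    (hF2.fderiv_right (m := 1) (by norm_num)).clm_apply contDiff_const
  have hhess_eq : ∀ (t : ℝ) (x : Fin n → ℝ) (k l : Fin n),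
      hessx ψ t x k l
        = fderiv ℝ (fun p : ℝ × (Fin n → ℝ) =>
            fderiv ℝ (fun q : ℝ × (Fin n → ℝ) => ψ q.1 q.2) p ((0 : ℝ), Pi.single k 1))
            (t, x) ((0 : ℝ), Pi.single l 1) := by
    intro t x k l
    have h1 : (fun y => pd k (ψ t) y) = fun y =>
        fderiv ℝ (fun q : ℝ × (Fin n → ℝ) => ψ q.1 q.2) (t, y) ((0 : ℝ), Pi.single k 1) := by
      funext y
      have := hgrad_eq t y k
      simpa [gradx] using this
    unfold hessx
    rw [h1]
    exact pd_slice _ (((hG1 k).differentiable one_ne_zero) (t, x)) l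
  have hhessc : ∀ k l : Fin n,
      Continuous fun p : ℝ × (Fin n → ℝ) => hessx ψ p.1 p.2 k l := by
    intro k l
    have hc : Continuous fun p : ℝ × (Fin n → ℝ) =>
        fderiv ℝ (fun q : ℝ × (Fin n → ℝ) =>
          fderiv ℝ (fun r : ℝ × (Fin n → ℝ) => ψ r.1 r.2) q ((0 : ℝ), Pi.single k 1))
          p ((0 : ℝ), Pi.single l 1) :=
      (((hG1 k).fderiv_right (m := 0) (by norm_num)).clm_apply contDiff_const).continuous
    have he : (fun p : ℝ × (Fin n → ℝ) => hessx ψ p.1 p.2 k l)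
        = fun p : ℝ × (Fin n → ℝ) =>
            fderiv ℝ (fun q : ℝ × (Fin n → ℝ) =>
              fderiv ℝ (fun r : ℝ × (Fin n → ℝ) => ψ r.1 r.2) q ((0 : ℝ), Pi.single k 1))
              p ((0 : ℝ), Pi.single l 1) := by
      funext p; rw [hhess_eq p.1 p.2 k l]
    rw [he]; exact hc
  have hpdac : ∀ k' j k : Fin n,
      Continuous fun p : ℝ × (Fin n → ℝ) => pd k (fun y => a k' j p.1 y) p.2 := by
    intro k' j k
    have hc : Continuous fun p : ℝ × (Fin n → ℝ) =>
        fderiv ℝ (fun q : ℝ × (Fin n → ℝ) => a k' j q.1 q.2) p ((0 : ℝ), Pi.single k 1) :=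
      (((ha_reg k' j).fderiv_right (m := 0) (by norm_num)).clm_apply contDiff_const).continuous
    have he : (fun p : ℝ × (Fin n → ℝ) => pd k (fun y => a k' j p.1 y) p.2)
        = fun p : ℝ × (Fin n → ℝ) =>
            fderiv ℝ (fun q : ℝ × (Fin n → ℝ) => a k' j q.1 q.2) p ((0 : ℝ), Pi.single k 1) := by
      funext p
      exact pd_slice (fun q : ℝ × (Fin n → ℝ) => a k' j q.1 q.2)
        (((ha_reg k' j).differentiable one_ne_zero) (p.1, p.2)) k
    rw [he]; exact hc
  have hac : ∀ k j : Fin n, Continuous fun p : ℝ × (Fin n → ℝ) => a k j p.1 p.2 :=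
    fun k j => (ha_reg k j).continuous
  have hS1c : Continuous fun p : ℝ × (Fin n → ℝ) =>
      ∑ m, ∑ m', ∑ k, ∑ l, a m k p.1 p.2 * a m' l p.1 p.2
        * gradx ψ p.1 p.2 m * gradx ψ p.1 p.2 m' * hessx ψ p.1 p.2 k l := by
    apply continuous_finset_sum _ fun m _ => ?_
    apply continuous_finset_sum _ fun m' _ => ?_
    apply continuous_finset_sum _ fun k _ => ?_
    apply continuous_finset_sum _ fun l _ => ?_
    exact ((((hac m k).mul (hac m' l)).mul (hgradc m)).mul (hgradc m')).mul (hhessc k l)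
  have haDc : ∀ k : Fin n, Continuous fun p : ℝ × (Fin n → ℝ) =>
      aD a k p.1 p.2 (gradx ψ p.1 p.2) (gradx ψ p.1 p.2) := by
    intro k
    unfold aD
    apply continuous_finset_sum _ fun k' _ => ?_
    apply continuous_finset_sum _ fun j _ => ?_
    exact ((hpdac k' j k).mul (hgradc k')).mul (hgradc j)
  have hS2c : Continuous fun p : ℝ × (Fin n → ℝ) =>
      ∑ m, ∑ k, a m k p.1 p.2 * gradx ψ p.1 p.2 m
        * aD a k p.1 p.2 (gradx ψ p.1 p.2) (gradx ψ p.1 p.2) := by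
    apply continuous_finset_sum _ fun m _ => ?_
    apply continuous_finset_sum _ fun k _ => ?_
    exact ((hac m k).mul (hgradc m)).mul (haDc k)
  have hgn : Continuous fun p : ℝ × (Fin n → ℝ) => ∑ i, gradx ψ p.1 p.2 i ^ 2 :=
    continuous_finset_sum _ fun i _ => (hgradc i).pow 2
  have hKc : IsCompact (Set.Icc (0 : ℝ) T ×ˢ closure Ω) :=
    isCompact_Icc.prod hΩ.isCompact_closure
  have hKne : (Set.Icc (0 : ℝ) T ×ˢ closure Ω).Nonempty :=
    ⟨(0, x₀), ⟨le_refl 0, hT.le⟩, subset_closure hx₀⟩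
  obtain ⟨p₀, hp₀K, hmin⟩ := hKc.exists_isMinOn hKne hgn.continuousOn
  obtain ⟨p₁, hp₁K, hmin1⟩ := hKc.exists_isMinOn hKne hS1c.continuousOn
  obtain ⟨p₂, hp₂K, hmin2⟩ := hKc.exists_isMinOn hKne hS2c.continuousOn
  set m : ℝ := ∑ i, gradx ψ p₀.1 p₀.2 i ^ 2 with hmdef
  set m1 : ℝ := ∑ m, ∑ m', ∑ k, ∑ l, a m k p₁.1 p₁.2 * a m' l p₁.1 p₁.2
      * gradx ψ p₁.1 p₁.2 m * gradx ψ p₁.1 p₁.2 m' * hessx ψ p₁.1 p₁.2 k l with hm1def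
  set m2 : ℝ := ∑ m, ∑ k, a m k p₂.1 p₂.2 * gradx ψ p₂.1 p₂.2 m
      * aD a k p₂.1 p₂.2 (gradx ψ p₂.1 p₂.2) (gradx ψ p₂.1 p₂.2) with hm2def
  have hm : 0 < m := by
    have hne := hgrad p₀.1 hp₀K.1 p₀.2 hp₀K.2
    obtain ⟨i, hi⟩ := Function.ne_iff.mp hne
    have hpos : (0 : ℝ) < gradx ψ p₀.1 p₀.2 i ^ 2 :=
      (sq_nonneg _).lt_of_ne (Ne.symm (pow_ne_zero 2 hi))
    exact Finset.sum_pos' (fun j _ => sq_nonneg _) ⟨i, Finset.mem_univ i, hpos⟩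
  have hβm : (0 : ℝ) < β * m := mul_pos hβ hm
  refine ⟨max 1 ((1 + 4 * |m1| + 2 * |m2|) / (4 * (β * m) ^ 2)),
    lt_of_lt_of_le one_pos (le_max_left _ _), 1, one_pos, ?_⟩
  intro lam hlam t ht x hx τ hτ
  have hlam1 : (1 : ℝ) ≤ lam := le_trans (le_max_left _ _) hlam
  have hlamB : 1 + 4 * |m1| + 2 * |m2| ≤ 4 * (β * m) ^ 2 * lam := by
    have h := le_trans (le_max_right _ _) hlam
    rw [div_le_iff₀ (by positivity)] at h
    linarith [h]
  have hKx : (t, x) ∈ Set.Icc (0 : ℝ) T ×ˢ closure Ω := ⟨⟨ht.1.le, ht.2.le⟩, subset_closure hx⟩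
  have hS1b : m1 ≤ ∑ m, ∑ m', ∑ k, ∑ l, a m k t x * a m' l t x
      * gradx ψ t x m * gradx ψ t x m' * hessx ψ t x k l := by
    have h := hmin1 hKx
    dsimp only at h
    rw [← hm1def] at h
    exact h
  have hS2b : m2 ≤ ∑ m, ∑ k, a m k t x * gradx ψ t x m
      * aD a k t x (gradx ψ t x) (gradx ψ t x) := by
    have h := hmin2 hKx
    dsimp only at h
    rw [← hm2def] at h
    exact h
  have hgm : m ≤ ∑ i, gradx ψ t x i ^ 2 := by
    have h := hmin hKx
    dsimp only at h
    rw [← hmdef] at h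
    exact h
  have hA : β * m ≤ aF a t x (gradx ψ t x) (gradx ψ t x) := by
    calc β * m ≤ β * ∑ i, gradx ψ t x i ^ 2 := mul_le_mul_of_nonneg_left hgm hβ.le
      _ ≤ ∑ k, ∑ j, a k j t x * gradx ψ t x k * gradx ψ t x j :=
          ha_ell t ht x hx (gradx ψ t x)
      _ = aF a t x (gradx ψ t x) (gradx ψ t x) := rfl
  have key : lam ^ 2 ≤
      4 * lam ^ 3 * (∑ m, ∑ m', ∑ k, ∑ l, a m k t x * a m' l t x
          * gradx ψ t x m * gradx ψ t x m' * hessx ψ t x k l)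
      + 4 * lam ^ 4 * aF a t x (gradx ψ t x) (gradx ψ t x) ^ 2
      + 2 * lam ^ 3 * ∑ m, ∑ k, a m k t x * gradx ψ t x m
          * aD a k t x (gradx ψ t x) (gradx ψ t x) := by
    set S1v : ℝ := ∑ m, ∑ m', ∑ k, ∑ l, a m k t x * a m' l t x
        * gradx ψ t x m * gradx ψ t x m' * hessx ψ t x k l
    set S2v : ℝ := ∑ m, ∑ k, a m k t x * gradx ψ t x m
        * aD a k t x (gradx ψ t x) (gradx ψ t x)
    set Av : ℝ := aF a t x (gradx ψ t x) (gradx ψ t x)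
    have hA2 : (β * m) ^ 2 ≤ Av ^ 2 := by nlinarith
    have hlampos : (0 : ℝ) < lam := lt_of_lt_of_le one_pos hlam1
    have hl3 : (0 : ℝ) ≤ lam ^ 3 := by positivity
    have h4 : lam ^ 3 * (1 + 4 * |m1| + 2 * |m2|) ≤ lam ^ 3 * (4 * (β * m) ^ 2 * lam) :=
      mul_le_mul_of_nonneg_left hlamB hl3
    have h6 : lam ^ 3 * (4 * (β * m) ^ 2 * lam) ≤ 4 * lam ^ 4 * Av ^ 2 := by
      have h := mul_le_mul_of_nonneg_left hA2 (show (0 : ℝ) ≤ 4 * lam ^ 4 by positivity)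
      nlinarith [h]
    have h7 : 4 * lam ^ 3 * (-|m1|) ≤ 4 * lam ^ 3 * S1v := by
      have h := le_trans (neg_abs_le m1) hS1b
      nlinarith [h]
    have h8 : 2 * lam ^ 3 * (-|m2|) ≤ 2 * lam ^ 3 * S2v := by
      have h := le_trans (neg_abs_le m2) hS2b
      nlinarith [h]
    have hl23 : lam ^ 2 ≤ lam ^ 3 := by nlinarith
    nlinarith [h4, h6, h7, h8, hl23]
  have hpos : (0 : ℝ) ≤ τ ^ 2 * (Real.exp (lam * ψ t x) / t) ^ 3 := by
    have := ht.1
    positivity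
  calc (1 : ℝ) * τ ^ 2 * lam ^ 2 * (Real.exp (lam * ψ t x) / t) ^ 3
      = (τ ^ 2 * (Real.exp (lam * ψ t x) / t) ^ 3) * lam ^ 2 := by ring
    _ ≤ (τ ^ 2 * (Real.exp (lam * ψ t x) / t) ^ 3)
        * (4 * lam ^ 3 * (∑ m, ∑ m', ∑ k, ∑ l, a m k t x * a m' l t x
              * gradx ψ t x m * gradx ψ t x m' * hessx ψ t x k l)
          + 4 * lam ^ 4 * aF a t x (gradx ψ t x) (gradx ψ t x) ^ 2
          + 2 * lam ^ 3 * ∑ m, ∑ k, a m k t x * gradx ψ t x m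
              * aD a k t x (gradx ψ t x) (gradx ψ t x)) :=
        mul_le_mul_of_nonneg_left key hpos
    _ = 4 * τ ^ 2 * lam ^ 3 * (Real.exp (lam * ψ t x) / t) ^ 3
          * (∑ m, ∑ m', ∑ k, ∑ l, a m k t x * a m' l t x
              * gradx ψ t x m * gradx ψ t x m' * hessx ψ t x k l)
        + 4 * τ ^ 2 * lam ^ 4 * (Real.exp (lam * ψ t x) / t) ^ 3
          * aF a t x (gradx ψ t x) (gradx ψ t x) ^ 2
        + 2 * τ ^ 2 * lam ^ 3 * (Real.exp (lam * ψ t x) / t) ^ 3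
          * ∑ m, ∑ k, a m k t x * gradx ψ t x m
              * aD a k t x (gradx ψ t x) (gradx ψ t x) := by ring
end

section
/- (Gårding-type positivity of q_α, estimate (pseudo1).) Let ψ ∈ C²(Q̄) be real-valued with ∇_xψ ≠ 0 on Q̄, satisfying: 4 Σ_{m,m̃,k,ℓ} a_{mk}a_{m̃ℓ} ξ_m ξ_{m̃} ∂²_{x_kx_ℓ}ψ − 2 Σ_{m,k} a_{mk} ∂_{x_m}ψ a_{(k)}(t,x,ξ',ξ') + 4 Σ_{m,k} a_{mk} ξ_m a_{(k)}(t,x,ξ',∇ψ) > 0 for all (t,x) ∈ Q̄ and ξ' ∈ ℝⁿ∖{0} with a(t,x,∇ψ,ξ') = 0. Then there exists λ₁ > 0 such that for every λ ≥ λ₁ there is a constant C > 0 with q_α(t,x,ξ',τ) ≥ C(|ξ'|² + τ²φ(t,x)²) for all (t,x) ∈ Q, ξ' ∈ ℝⁿ and τ > 0. -/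
open Real

/-- The symbol `q_α` associated with the Carleman weight
`α(t,x) = (e^{λψ} − e^{2λ‖ψ‖_{C⁰}})/t`, whose spatial gradient is `λφ∇ψ` and whose
spatial Hessian is `λφ∂²ψ + λ²φ∂ψ∂ψ`, where `φ = e^{λψ}/t`. -/
noncomputable def qAlpha {n : ℕ} (a : Fin n → Fin n → ℝ → (Fin n → ℝ) → ℝ)
    (ψ : ℝ → (Fin n → ℝ) → ℝ) (lam t : ℝ) (x ξ : Fin n → ℝ) (τ : ℝ) : ℝ :=
  let φ := Real.exp (lam * ψ t x) / t
  4 * ∑ m, ∑ m', ∑ k, ∑ l, a m k t x * a m' l t x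
      * (ξ m * ξ m' + τ ^ 2 * lam ^ 2 * φ ^ 2 * gradx ψ t x m * gradx ψ t x m')
      * (lam * φ * hessx ψ t x k l + lam ^ 2 * φ * gradx ψ t x k * gradx ψ t x l)
  - 2 * lam * φ * ∑ m, ∑ k, a m k t x * gradx ψ t x m
      * (aD a k t x ξ ξ
        - τ ^ 2 * lam ^ 2 * φ ^ 2 * aD a k t x (gradx ψ t x) (gradx ψ t x))
  + 4 * lam * φ * ∑ m, ∑ k, a m k t x * ξ m * aD a k t x ξ (gradx ψ t x)

/-! ### Auxiliary lemmas -/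

section Deriv

lemma pd_slice_eq {n : ℕ} {F : ℝ × (Fin n → ℝ) → ℝ} (hF : ContDiff ℝ 1 F) (k : Fin n)
    (t : ℝ) (x : Fin n → ℝ) :
    pd k (fun y => F (t, y)) x = fderiv ℝ F (t, x) (0, Pi.single k 1) := by
  have h1 : HasFDerivAt (fun y : Fin n → ℝ => (t, y))
      (ContinuousLinearMap.inr ℝ ℝ (Fin n → ℝ)) x :=
    HasFDerivAt.prodMk (hasFDerivAt_const t x) (hasFDerivAt_id x)
  have h2 : HasFDerivAt F (fderiv ℝ F (t, x)) (t, x) :=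
    (hF.differentiable one_ne_zero (t, x)).hasFDerivAt
  have h3 : HasFDerivAt (fun y => F (t, y))
      ((fderiv ℝ F (t, x)).comp (ContinuousLinearMap.inr ℝ ℝ (Fin n → ℝ))) x := h2.comp x h1
  rw [pd, h3.fderiv]
  rfl

lemma continuous_pd_slice {n : ℕ} {F : ℝ × (Fin n → ℝ) → ℝ} (hF : ContDiff ℝ 1 F) (k : Fin n) :
    Continuous (fun p : ℝ × (Fin n → ℝ) => pd k (fun y => F (p.1, y)) p.2) := by
  have h : (fun p : ℝ × (Fin n → ℝ) => pd k (fun y => F (p.1, y)) p.2)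
      = fun p => fderiv ℝ F p (0, Pi.single k 1) := by
    funext p
    rw [pd_slice_eq hF]
  rw [h]
  exact (hF.continuous_fderiv one_ne_zero).clm_apply continuous_const

lemma continuous_gradx {n : ℕ} {ψ : ℝ → (Fin n → ℝ) → ℝ}
    (hψ : ContDiff ℝ 2 (fun p : ℝ × (Fin n → ℝ) => ψ p.1 p.2)) (k : Fin n) :
    Continuous (fun p : ℝ × (Fin n → ℝ) => gradx ψ p.1 p.2 k) :=
  continuous_pd_slice (hψ.of_le one_le_two) k

lemma continuous_hessx {n : ℕ} {ψ : ℝ → (Fin n → ℝ) → ℝ}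
    (hψ : ContDiff ℝ 2 (fun p : ℝ × (Fin n → ℝ) => ψ p.1 p.2)) (k l : Fin n) :
    Continuous (fun p : ℝ × (Fin n → ℝ) => hessx ψ p.1 p.2 k l) := by
  set F := fun p : ℝ × (Fin n → ℝ) => ψ p.1 p.2 with hFdef
  have hG : ContDiff ℝ 1 (fun p : ℝ × (Fin n → ℝ) => fderiv ℝ F p (0, Pi.single k 1)) :=
    (hψ.fderiv_right (m := 1) le_rfl).clm_apply contDiff_const
  have key : ∀ t x, hessx ψ t x k l
      = pd l (fun y => (fun p : ℝ × (Fin n → ℝ) =>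
          fderiv ℝ F p (0, Pi.single k 1)) (t, y)) x := by
    intro t x
    unfold hessx
    congr 1
    funext y
    exact pd_slice_eq (hψ.of_le one_le_two) k t y
  have h2 := continuous_pd_slice
    (F := fun p : ℝ × (Fin n → ℝ) => fderiv ℝ F p (0, Pi.single k 1)) hG l
  simpa [← key] using h2

end Deriv

section Algebra

variable {n : ℕ} (a : Fin n → Fin n → ℝ → (Fin n → ℝ) → ℝ)
  (ψ : ℝ → (Fin n → ℝ) → ℝ) (t : ℝ) (x : Fin n → ℝ)

/-- quadruple sum against the Hessian -/
noncomputable def Q4 (u v : Fin n → ℝ) : ℝ :=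
  ∑ m, ∑ m', ∑ k, ∑ l, a m k t x * a m' l t x * u m * v m' * hessx ψ t x k l

/-- quadruple sum against grad⊗grad -/
noncomputable def P4 (u v : Fin n → ℝ) : ℝ :=
  ∑ m, ∑ m', ∑ k, ∑ l, a m k t x * a m' l t x * u m * v m'
    * gradx ψ t x k * gradx ψ t x l

noncomputable def R1 (u v : Fin n → ℝ) : ℝ :=
  ∑ m, ∑ k, a m k t x * gradx ψ t x m * aD a k t x u v

noncomputable def R3 (u v : Fin n → ℝ) : ℝ :=
  ∑ m, ∑ k, a m k t x * u m * aD a k t x v (gradx ψ t x)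

noncomputable def Gfun (ξ : Fin n → ℝ) (σ : ℝ) : ℝ :=
  (aF a t x ξ (gradx ψ t x)) ^ 2 + σ ^ 2 * (aF a t x (gradx ψ t x) (gradx ψ t x)) ^ 2

lemma P4_eq_sq (u : Fin n → ℝ) :
    P4 a ψ t x u u = (aF a t x u (gradx ψ t x)) ^ 2 := by
  rw [aF, sq, Finset.sum_mul_sum]
  unfold P4
  refine Finset.sum_congr rfl fun m _ => Finset.sum_congr rfl fun m' _ => ?_
  rw [Finset.sum_mul_sum]
  refine Finset.sum_congr rfl fun k _ => Finset.sum_congr rfl fun l _ => by ring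

lemma qSym_decomp (ξ : Fin n → ℝ) (σ : ℝ) :
    qSym a ψ t x ξ σ =
      4 * Q4 a ψ t x ξ ξ + 4 * σ ^ 2 * Q4 a ψ t x (gradx ψ t x) (gradx ψ t x)
      - 2 * R1 a ψ t x ξ ξ + 2 * σ ^ 2 * R1 a ψ t x (gradx ψ t x) (gradx ψ t x)
      + 4 * R3 a ψ t x ξ ξ := by
  unfold qSym Q4 R1 R3
  have h1 : ∑ m, ∑ m', ∑ k, ∑ l, a m k t x * a m' l t x
      * (ξ m * ξ m' + σ ^ 2 * gradx ψ t x m * gradx ψ t x m') * hessx ψ t x k l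
    = (∑ m, ∑ m', ∑ k, ∑ l, a m k t x * a m' l t x * ξ m * ξ m' * hessx ψ t x k l)
      + σ ^ 2 * ∑ m, ∑ m', ∑ k, ∑ l, a m k t x * a m' l t x * gradx ψ t x m
          * gradx ψ t x m' * hessx ψ t x k l := by
    simp only [Finset.mul_sum, ← Finset.sum_add_distrib]
    refine Finset.sum_congr rfl fun m _ => Finset.sum_congr rfl fun m' _ =>
      Finset.sum_congr rfl fun k _ => Finset.sum_congr rfl fun l _ => by ring
  have h2 : ∑ m, ∑ k, a m k t x * gradx ψ t x m
      * (aD a k t x ξ ξ - σ ^ 2 * aD a k t x (gradx ψ t x) (gradx ψ t x))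
    = (∑ m, ∑ k, a m k t x * gradx ψ t x m * aD a k t x ξ ξ)
      - σ ^ 2 * ∑ m, ∑ k, a m k t x * gradx ψ t x m
          * aD a k t x (gradx ψ t x) (gradx ψ t x) := by
    simp only [Finset.mul_sum, ← Finset.sum_sub_distrib]
    refine Finset.sum_congr rfl fun m _ => Finset.sum_congr rfl fun k _ => by ring
  rw [h1, h2]
  ring

lemma qAlpha_decomp (lam τ : ℝ) (ξ : Fin n → ℝ) :
    qAlpha a ψ lam t x ξ τ =
      lam * (Real.exp (lam * ψ t x) / t) *
        (qSym a ψ t x ξ (τ * (lam * (Real.exp (lam * ψ t x) / t)))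
          + 4 * lam * Gfun a ψ t x ξ (τ * (lam * (Real.exp (lam * ψ t x) / t)))) := by
  rw [qSym_decomp, Gfun, ← P4_eq_sq, ← P4_eq_sq]
  set φ := Real.exp (lam * ψ t x) / t with hφ
  show
    4 * ∑ m, ∑ m', ∑ k, ∑ l, a m k t x * a m' l t x
      * (ξ m * ξ m' + τ ^ 2 * lam ^ 2 * φ ^ 2 * gradx ψ t x m * gradx ψ t x m')
      * (lam * φ * hessx ψ t x k l + lam ^ 2 * φ * gradx ψ t x k * gradx ψ t x l)
    - 2 * lam * φ * ∑ m, ∑ k, a m k t x * gradx ψ t x m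
      * (aD a k t x ξ ξ
        - τ ^ 2 * lam ^ 2 * φ ^ 2 * aD a k t x (gradx ψ t x) (gradx ψ t x))
    + 4 * lam * φ * ∑ m, ∑ k, a m k t x * ξ m * aD a k t x ξ (gradx ψ t x) = _
  have h1 : ∑ m, ∑ m', ∑ k, ∑ l, a m k t x * a m' l t x
      * (ξ m * ξ m' + τ ^ 2 * lam ^ 2 * φ ^ 2 * gradx ψ t x m * gradx ψ t x m')
      * (lam * φ * hessx ψ t x k l + lam ^ 2 * φ * gradx ψ t x k * gradx ψ t x l)
    = lam * φ * Q4 a ψ t x ξ ξ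
      + τ ^ 2 * lam ^ 3 * φ ^ 3 * Q4 a ψ t x (gradx ψ t x) (gradx ψ t x)
      + lam ^ 2 * φ * P4 a ψ t x ξ ξ
      + τ ^ 2 * lam ^ 4 * φ ^ 3 * P4 a ψ t x (gradx ψ t x) (gradx ψ t x) := by
    unfold Q4 P4
    simp only [Finset.mul_sum, ← Finset.sum_add_distrib]
    refine Finset.sum_congr rfl fun m _ => Finset.sum_congr rfl fun m' _ =>
      Finset.sum_congr rfl fun k _ => Finset.sum_congr rfl fun l _ => by ring
  have h2 : ∑ m, ∑ k, a m k t x * gradx ψ t x m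
      * (aD a k t x ξ ξ
        - τ ^ 2 * lam ^ 2 * φ ^ 2 * aD a k t x (gradx ψ t x) (gradx ψ t x))
    = R1 a ψ t x ξ ξ
      - τ ^ 2 * lam ^ 2 * φ ^ 2 * R1 a ψ t x (gradx ψ t x) (gradx ψ t x) := by
    unfold R1
    simp only [Finset.mul_sum, ← Finset.sum_sub_distrib]
    refine Finset.sum_congr rfl fun m _ => Finset.sum_congr rfl fun k _ => by ring
  have h3 : ∑ m, ∑ k, a m k t x * ξ m * aD a k t x ξ (gradx ψ t x)
      = R3 a ψ t x ξ ξ := rfl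
  rw [h1, h2, h3]
  ring

lemma aD_scale (p : Fin n) (r : ℝ) (u v : Fin n → ℝ) :
    aD a p t x (fun i => r * u i) (fun i => r * v i) = r ^ 2 * aD a p t x u v := by
  unfold aD
  simp only [Finset.mul_sum]
  exact Finset.sum_congr rfl fun k _ => Finset.sum_congr rfl fun j _ => by ring

lemma aD_scale_left (p : Fin n) (r : ℝ) (u v : Fin n → ℝ) :
    aD a p t x (fun i => r * u i) v = r * aD a p t x u v := by
  unfold aD
  simp only [Finset.mul_sum]
  exact Finset.sum_congr rfl fun k _ => Finset.sum_congr rfl fun j _ => by ring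

lemma aF_scale_left (r : ℝ) (u v : Fin n → ℝ) :
    aF a t x (fun i => r * u i) v = r * aF a t x u v := by
  unfold aF
  simp only [Finset.mul_sum]
  exact Finset.sum_congr rfl fun k _ => Finset.sum_congr rfl fun j _ => by ring

lemma Q4_scale (r : ℝ) (u : Fin n → ℝ) :
    Q4 a ψ t x (fun i => r * u i) (fun i => r * u i) = r ^ 2 * Q4 a ψ t x u u := by
  unfold Q4
  simp only [Finset.mul_sum]
  exact Finset.sum_congr rfl fun m _ => Finset.sum_congr rfl fun m' _ =>
    Finset.sum_congr rfl fun k _ => Finset.sum_congr rfl fun l _ => by ring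

lemma R1_scale (r : ℝ) (u : Fin n → ℝ) :
    R1 a ψ t x (fun i => r * u i) (fun i => r * u i) = r ^ 2 * R1 a ψ t x u u := by
  unfold R1
  simp only [aD_scale, Finset.mul_sum]
  exact Finset.sum_congr rfl fun m _ => Finset.sum_congr rfl fun k _ => by ring

lemma R3_scale (r : ℝ) (u : Fin n → ℝ) :
    R3 a ψ t x (fun i => r * u i) (fun i => r * u i) = r ^ 2 * R3 a ψ t x u u := by
  unfold R3
  simp only [aD_scale_left, Finset.mul_sum]
  exact Finset.sum_congr rfl fun m _ => Finset.sum_congr rfl fun k _ => by ring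

lemma qSym_scale (r : ℝ) (ξ : Fin n → ℝ) (σ : ℝ) :
    qSym a ψ t x (fun i => r * ξ i) (r * σ) = r ^ 2 * qSym a ψ t x ξ σ := by
  rw [qSym_decomp, qSym_decomp, Q4_scale, R1_scale, R3_scale]
  ring

lemma Gfun_scale (r : ℝ) (ξ : Fin n → ℝ) (σ : ℝ) :
    Gfun a ψ t x (fun i => r * ξ i) (r * σ) = r ^ 2 * Gfun a ψ t x ξ σ := by
  unfold Gfun
  rw [aF_scale_left]
  ring

lemma aF_symm (ha_symm : ∀ k j, a k j = a j k) (u v : Fin n → ℝ) :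
    aF a t x u v = aF a t x v u := by
  rw [aF, aF, Finset.sum_comm]
  refine Finset.sum_congr rfl fun j _ => Finset.sum_congr rfl fun k _ => ?_
  rw [ha_symm k j]
  ring

end Algebra
set_option maxHeartbeats 2000000 in
theorem statement6
    (n : ℕ) (Ω : Set (Fin n → ℝ)) (hΩ : Bornology.IsBounded Ω) (T : ℝ) (hT : 0 < T)
    (a : Fin n → Fin n → ℝ → (Fin n → ℝ) → ℝ)
    (ha_symm : ∀ k j, a k j = a j k)
    (ha_reg : ∀ k j, ContDiff ℝ 1 (fun p : ℝ × (Fin n → ℝ) => a k j p.1 p.2))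
    (β : ℝ) (hβ : 0 < β)
    (ha_ell : ∀ t ∈ Set.Ioo (0:ℝ) T, ∀ x ∈ Ω, ∀ η : Fin n → ℝ,
      β * ∑ i, η i ^ 2 ≤ ∑ k, ∑ j, a k j t x * η k * η j)
    (ψ : ℝ → (Fin n → ℝ) → ℝ)
    (hψ : ContDiff ℝ 2 (fun p : ℝ × (Fin n → ℝ) => ψ p.1 p.2))
    (hgrad : ∀ t ∈ Set.Icc (0:ℝ) T, ∀ x ∈ closure Ω, gradx ψ t x ≠ 0)
    -- the pseudo-convexity inequality (ramsai) on the characteristic set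
    (hpos : ∀ t ∈ Set.Icc (0:ℝ) T, ∀ x ∈ closure Ω, ∀ ξ : Fin n → ℝ, ξ ≠ 0 →
      aF a t x (gradx ψ t x) ξ = 0 →
        0 < 4 * ∑ m, ∑ m', ∑ k, ∑ l, a m k t x * a m' l t x * ξ m * ξ m'
              * hessx ψ t x k l
          - 2 * ∑ m, ∑ k, a m k t x * gradx ψ t x m * aD a k t x ξ ξ
          + 4 * ∑ m, ∑ k, a m k t x * ξ m * aD a k t x ξ (gradx ψ t x)) :
    ∃ lam₁ > (0:ℝ), ∀ lam ≥ lam₁, ∃ C > (0:ℝ), ∀ t ∈ Set.Ioo (0:ℝ) T, ∀ x ∈ Ω,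
      ∀ (ξ : Fin n → ℝ), ∀ τ > (0:ℝ),
        C * (∑ i, ξ i ^ 2 + τ ^ 2 * (Real.exp (lam * ψ t x) / t) ^ 2) ≤
          qAlpha a ψ lam t x ξ τ := by
  classical
  rcases Set.eq_empty_or_nonempty Ω with hE | hne
  · exact ⟨1, one_pos, fun lam _ => ⟨1, one_pos, fun t _ x hx => by simp [hE] at hx⟩⟩
  -- the compact base set
  set QB : Set (ℝ × (Fin n → ℝ)) := Set.Icc (0:ℝ) T ×ˢ closure Ω with hQBdef
  have hQBc : IsCompact QB :=
    isCompact_Icc.prod (Metric.isCompact_of_isClosed_isBounded isClosed_closure hΩ.closure)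
  have hQBne : QB.Nonempty := by
    obtain ⟨x₀, hx₀⟩ := hne
    exact ⟨(0, x₀), ⟨Set.left_mem_Icc.2 hT.le, subset_closure hx₀⟩⟩
  -- ellipticity on the closure
  have hell : ∀ p ∈ QB, ∀ η : Fin n → ℝ, β * ∑ i, η i ^ 2 ≤ aF a p.1 p.2 η η := by
    intro p hp η
    have hA : ∀ k j, Continuous (fun p : ℝ × (Fin n → ℝ) => a k j p.1 p.2) :=
      fun k j => (ha_reg k j).continuous
    have hclosed : IsClosed {p : ℝ × (Fin n → ℝ) |
        β * ∑ i, η i ^ 2 ≤ ∑ k, ∑ j, a k j p.1 p.2 * η k * η j} := by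
      apply isClosed_le continuous_const
      fun_prop
    have hsub : Set.Ioo (0:ℝ) T ×ˢ Ω ⊆ {p : ℝ × (Fin n → ℝ) |
        β * ∑ i, η i ^ 2 ≤ ∑ k, ∑ j, a k j p.1 p.2 * η k * η j} :=
      fun p hp => ha_ell _ hp.1 _ hp.2 η
    have hQB : QB ⊆ closure (Set.Ioo (0:ℝ) T ×ˢ Ω) := by
      rw [closure_prod_eq, closure_Ioo hT.ne]
    exact (closure_minimal hsub hclosed) (hQB hp)
  -- positivity of a(∇ψ,∇ψ)
  have hgg : ∀ p ∈ QB, 0 < aF a p.1 p.2 (gradx ψ p.1 p.2) (gradx ψ p.1 p.2) := by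
    intro p hp
    have hne0 : gradx ψ p.1 p.2 ≠ 0 := hgrad p.1 hp.1 p.2 hp.2
    obtain ⟨i, hi⟩ := Function.ne_iff.1 hne0
    have hi' : gradx ψ p.1 p.2 i ≠ 0 := by simpa using hi
    have hsum : 0 < ∑ i, gradx ψ p.1 p.2 i ^ 2 := by
      have h1 : (0:ℝ) < gradx ψ p.1 p.2 i ^ 2 := by
        have := abs_pos.2 hi'
        nlinarith [sq_abs (gradx ψ p.1 p.2 i)]
      have h2 : gradx ψ p.1 p.2 i ^ 2 ≤ ∑ i, gradx ψ p.1 p.2 i ^ 2 :=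
        Finset.single_le_sum (f := fun j => gradx ψ p.1 p.2 j ^ 2)
          (fun j _ => sq_nonneg _) (Finset.mem_univ i)
      linarith
    have := hell p hp (gradx ψ p.1 p.2)
    nlinarith
  -- the sphere
  set S : Set ((Fin n → ℝ) × ℝ) := {v | (∑ i, v.1 i ^ 2) + v.2 ^ 2 = 1} with hSdef
  have hSc : IsCompact S := by
    have hcl : IsClosed S := by
      have : Continuous fun v : (Fin n → ℝ) × ℝ => (∑ i, v.1 i ^ 2) + v.2 ^ 2 := by fun_prop
      exact isClosed_eq this continuous_const
    have hbd : S ⊆ Metric.closedBall 0 1 := by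
      intro v hv
      have hv' : (∑ i, v.1 i ^ 2) + v.2 ^ 2 = 1 := hv
      have hsum_nonneg : (0:ℝ) ≤ ∑ i, v.1 i ^ 2 := Finset.sum_nonneg fun i _ => sq_nonneg _
      rw [Metric.mem_closedBall, dist_zero_right, Prod.norm_def]
      refine max_le ?_ ?_
      · rw [pi_norm_le_iff_of_nonneg zero_le_one]
        intro i
        rw [Real.norm_eq_abs, ← Real.sqrt_one]
        rw [show |v.1 i| = Real.sqrt (v.1 i ^ 2) by rw [Real.sqrt_sq_eq_abs]]
        apply Real.sqrt_le_sqrt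
        have hle : v.1 i ^ 2 ≤ ∑ j, v.1 j ^ 2 := by
          simpa using Finset.single_le_sum (f := fun j => v.1 j ^ 2)
            (fun j _ => sq_nonneg _) (Finset.mem_univ i)
        nlinarith [sq_nonneg v.2]
      · rw [Real.norm_eq_abs, ← Real.sqrt_one]
        rw [show |v.2| = Real.sqrt (v.2 ^ 2) by rw [Real.sqrt_sq_eq_abs]]
        apply Real.sqrt_le_sqrt
        linarith
    exact Metric.isCompact_of_isClosed_isBounded hcl
      (Metric.isBounded_closedBall.subset hbd)
  set K : Set ((ℝ × (Fin n → ℝ)) × ((Fin n → ℝ) × ℝ)) := QB ×ˢ S with hKdef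
  have hKc : IsCompact K := hQBc.prod hSc
  have hKne : K.Nonempty := by
    obtain ⟨p₀, hp₀⟩ := hQBne
    refine ⟨(p₀, (fun _ => 0, 1)), ⟨hp₀, ?_⟩⟩
    show (∑ i : Fin n, (0:ℝ) ^ 2) + (1:ℝ) ^ 2 = 1
    simp
  -- continuity of the symbols
  have hA' : ∀ m k, Continuous (fun q : (ℝ × (Fin n → ℝ)) × ((Fin n → ℝ) × ℝ) =>
      a m k q.1.1 q.1.2) := fun m k => (ha_reg m k).continuous.comp continuous_fst
  have hg' : ∀ m, Continuous (fun q : (ℝ × (Fin n → ℝ)) × ((Fin n → ℝ) × ℝ) =>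
      gradx ψ q.1.1 q.1.2 m) := fun m => (continuous_gradx hψ m).comp continuous_fst
  have hH' : ∀ k l, Continuous (fun q : (ℝ × (Fin n → ℝ)) × ((Fin n → ℝ) × ℝ) =>
      hessx ψ q.1.1 q.1.2 k l) := fun k l => (continuous_hessx hψ k l).comp continuous_fst
  have hD' : ∀ p k j, Continuous (fun q : (ℝ × (Fin n → ℝ)) × ((Fin n → ℝ) × ℝ) =>
      pd p (fun y => a k j q.1.1 y) q.1.2) :=
    fun p k j => (continuous_pd_slice (ha_reg k j) p).comp continuous_fst
  have hxk : ∀ m, Continuous (fun q : (ℝ × (Fin n → ℝ)) × ((Fin n → ℝ) × ℝ) =>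
      q.2.1 m) := fun m => (continuous_apply m).comp (continuous_fst.comp continuous_snd)
  have hσc : Continuous (fun q : (ℝ × (Fin n → ℝ)) × ((Fin n → ℝ) × ℝ) =>
      q.2.2) := continuous_snd.comp continuous_snd
  have hPc : Continuous (fun q : (ℝ × (Fin n → ℝ)) × ((Fin n → ℝ) × ℝ) =>
      qSym a ψ q.1.1 q.1.2 q.2.1 q.2.2) := by
    unfold qSym aD
    refine Continuous.add (Continuous.sub (continuous_const.mul ?_)
      (continuous_const.mul ?_)) (continuous_const.mul ?_)
    · refine continuous_finset_sum _ fun m _ => continuous_finset_sum _ fun m' _ =>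
        continuous_finset_sum _ fun k _ => continuous_finset_sum _ fun l _ => ?_
      exact (((hA' m k).mul (hA' m' l)).mul (((hxk m).mul (hxk m')).add
        (((hσc.pow 2).mul (hg' m)).mul (hg' m')))).mul (hH' k l)
    · refine continuous_finset_sum _ fun m _ => continuous_finset_sum _ fun k _ => ?_
      refine Continuous.mul ((hA' m k).mul (hg' m)) (Continuous.sub ?_ ?_)
      · refine continuous_finset_sum _ fun k' _ => continuous_finset_sum _ fun j _ => ?_
        exact ((hD' k k' j).mul (hxk k')).mul (hxk j)
      · refine Continuous.mul (hσc.pow 2) ?_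
        refine continuous_finset_sum _ fun k' _ => continuous_finset_sum _ fun j _ => ?_
        exact ((hD' k k' j).mul (hg' k')).mul (hg' j)
    · refine continuous_finset_sum _ fun m _ => continuous_finset_sum _ fun k _ => ?_
      refine Continuous.mul ((hA' m k).mul (hxk m)) ?_
      refine continuous_finset_sum _ fun k' _ => continuous_finset_sum _ fun j _ => ?_
      exact ((hD' k k' j).mul (hxk k')).mul (hg' j)
  have hGc : Continuous (fun q : (ℝ × (Fin n → ℝ)) × ((Fin n → ℝ) × ℝ) =>
      Gfun a ψ q.1.1 q.1.2 q.2.1 q.2.2) := by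
    unfold Gfun aF
    have h1 : Continuous (fun q : (ℝ × (Fin n → ℝ)) × ((Fin n → ℝ) × ℝ) =>
        ∑ k, ∑ j, a k j q.1.1 q.1.2 * q.2.1 k * gradx ψ q.1.1 q.1.2 j) :=
      continuous_finset_sum _ fun k _ => continuous_finset_sum _ fun j _ =>
        ((hA' k j).mul (hxk k)).mul (hg' j)
    have h2 : Continuous (fun q : (ℝ × (Fin n → ℝ)) × ((Fin n → ℝ) × ℝ) =>
        ∑ k, ∑ j, a k j q.1.1 q.1.2 * gradx ψ q.1.1 q.1.2 k * gradx ψ q.1.1 q.1.2 j) :=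
      continuous_finset_sum _ fun k _ => continuous_finset_sum _ fun j _ =>
        ((hA' k j).mul (hg' k)).mul (hg' j)
    exact (h1.pow 2).add ((hσc.pow 2).mul (h2.pow 2))
  have hGnonneg : ∀ t x ξ σ, 0 ≤ Gfun a ψ t x ξ σ := by
    intro t x ξ σ
    unfold Gfun
    positivity
  -- positivity of qSym on the characteristic set
  have hbase : ∀ q ∈ K, Gfun a ψ q.1.1 q.1.2 q.2.1 q.2.2 = 0 →
      0 < qSym a ψ q.1.1 q.1.2 q.2.1 q.2.2 := by
    rintro ⟨⟨t, x⟩, ξ, σ⟩ ⟨hp, hS⟩ hG0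
    have hgg' := hgg (t, x) hp
    have h1 : aF a t x ξ (gradx ψ t x) = 0 ∧ σ = 0 := by
      unfold Gfun at hG0
      have hmn : 0 ≤ σ ^ 2 * aF a t x (gradx ψ t x) (gradx ψ t x) ^ 2 :=
        mul_nonneg (sq_nonneg _) (sq_nonneg _)
      have e1 : aF a t x ξ (gradx ψ t x) ^ 2 = 0 := by
        nlinarith [sq_nonneg (aF a t x ξ (gradx ψ t x))]
      have e2 : σ ^ 2 * aF a t x (gradx ψ t x) (gradx ψ t x) ^ 2 = 0 := by
        nlinarith [sq_nonneg (aF a t x ξ (gradx ψ t x))]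
      refine ⟨sq_eq_zero_iff.1 e1, ?_⟩
      rcases mul_eq_zero.1 e2 with h | h
      · exact sq_eq_zero_iff.1 h
      · exact absurd (sq_eq_zero_iff.1 h) (ne_of_gt hgg')
    have hξne : ξ ≠ 0 := by
      intro h0
      have hS' : (∑ i, ξ i ^ 2) + σ ^ 2 = 1 := hS
      rw [h0, h1.2] at hS'
      simp at hS'
    have hchar : aF a t x (gradx ψ t x) ξ = 0 := by
      rw [aF_symm a t x ha_symm]
      exact h1.1
    have hp1 : t ∈ Set.Icc (0:ℝ) T := hp.1
    have hp2 : x ∈ closure Ω := hp.2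
    have hE := hpos t hp1 x hp2 ξ hξne hchar
    have hEq : 4 * ∑ m, ∑ m', ∑ k, ∑ l, a m k t x * a m' l t x * ξ m * ξ m'
              * hessx ψ t x k l
          - 2 * ∑ m, ∑ k, a m k t x * gradx ψ t x m * aD a k t x ξ ξ
          + 4 * ∑ m, ∑ k, a m k t x * ξ m * aD a k t x ξ (gradx ψ t x)
        = qSym a ψ t x ξ 0 := by
      rw [qSym_decomp]
      unfold Q4 R1 R3
      ring
    show 0 < qSym a ψ t x ξ σ
    rw [h1.2]
    rw [hEq] at hE
    exact hE
  -- compactness: uniform positivity of qSym + m₀ * Gfun on K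
  set f : ℕ → ((ℝ × (Fin n → ℝ)) × ((Fin n → ℝ) × ℝ)) → ℝ :=
    fun m q => qSym a ψ q.1.1 q.1.2 q.2.1 q.2.2 + (m:ℝ) * Gfun a ψ q.1.1 q.1.2 q.2.1 q.2.2
    with hfdef
  have hfc : ∀ m : ℕ, Continuous (f m) := fun m => hPc.add (continuous_const.mul hGc)
  set U : ℕ → Set ((ℝ × (Fin n → ℝ)) × ((Fin n → ℝ) × ℝ)) := fun m => {q | 0 < f m q}
    with hUdef
  have hUopen : ∀ m, IsOpen (U m) := fun m => isOpen_lt continuous_const (hfc m)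
  have hcover : K ⊆ ⋃ m, U m := by
    intro q hq
    rcases eq_or_lt_of_le (hGnonneg q.1.1 q.1.2 q.2.1 q.2.2) with hG0 | hGpos
    · refine Set.mem_iUnion.2 ⟨0, ?_⟩
      have := hbase q hq hG0.symm
      show 0 < f 0 q
      simp only [hfdef, Nat.cast_zero, zero_mul, add_zero]
      exact this
    · obtain ⟨m, hm⟩ := exists_nat_gt
        ((- qSym a ψ q.1.1 q.1.2 q.2.1 q.2.2) / Gfun a ψ q.1.1 q.1.2 q.2.1 q.2.2)
      refine Set.mem_iUnion.2 ⟨m, ?_⟩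
      show 0 < f m q
      have := (div_lt_iff₀ hGpos).1 hm
      simp only [hfdef]
      linarith
  obtain ⟨b, hb⟩ := hKc.elim_finite_subcover U hUopen hcover
  set m₀ : ℕ := b.sup id with hm₀def
  have hKU : ∀ q ∈ K, 0 < f m₀ q := by
    intro q hq
    obtain ⟨i, hib, hiU⟩ := Set.mem_iUnion₂.1 (hb hq)
    have hile : (i:ℝ) ≤ (m₀:ℝ) := Nat.cast_le.2 (Finset.le_sup (f := id) hib)
    have hGq := hGnonneg q.1.1 q.1.2 q.2.1 q.2.2
    have : 0 < f i q := hiU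
    simp only [hfdef] at this ⊢
    nlinarith
  obtain ⟨q₀, hq₀K, hq₀min'⟩ := hKc.exists_isMinOn hKne (hfc m₀).continuousOn
  have hq₀min : ∀ q ∈ K, f m₀ q₀ ≤ f m₀ q := fun q hq => hq₀min' hq
  set c : ℝ := f m₀ q₀ with hcdef
  have hc : 0 < c := hKU q₀ hq₀K
  -- minimum of ψ on QB
  obtain ⟨pm, hpmK, hpmmin'⟩ := hQBc.exists_isMinOn hQBne hψ.continuous.continuousOn
  have hpmmin : ∀ p ∈ QB, ψ pm.1 pm.2 ≤ ψ p.1 p.2 := fun p hp => hpmmin' hp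
  set mψ : ℝ := ψ pm.1 pm.2 with hmψdef
  -- choose lam₁
  refine ⟨max 1 (m₀:ℝ), lt_of_lt_of_le one_pos (le_max_left _ _), ?_⟩
  intro lam hlam
  have hlam1 : (1:ℝ) ≤ lam := le_trans (le_max_left _ _) hlam
  have hlampos : (0:ℝ) < lam := lt_of_lt_of_le one_pos hlam1
  have hlamm₀ : (m₀:ℝ) ≤ lam := le_trans (le_max_right _ _) hlam
  set κ : ℝ := Real.exp (lam * mψ) / T with hκdef
  have hκpos : 0 < κ := div_pos (Real.exp_pos _) hT
  refine ⟨c * lam * κ, by positivity, ?_⟩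
  intro t ht x hx ξ τ hτ
  have htpos : 0 < t := ht.1
  have hxcl : x ∈ closure Ω := subset_closure hx
  have htIcc : t ∈ Set.Icc (0:ℝ) T := ⟨ht.1.le, ht.2.le⟩
  have hpQB : (t, x) ∈ QB := ⟨htIcc, hxcl⟩
  set φ : ℝ := Real.exp (lam * ψ t x) / t with hφdef
  have hφpos : 0 < φ := div_pos (Real.exp_pos _) htpos
  have hκφ : κ ≤ φ := by
    apply div_le_div₀ (Real.exp_pos _).le _ htpos ht.2.le
    exact Real.exp_le_exp.2 (mul_le_mul_of_nonneg_left (hpmmin (t, x) hpQB) hlampos.le)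
  set σ : ℝ := τ * (lam * φ) with hσdef
  have hσpos : 0 < σ := by positivity
  set s : ℝ := Real.sqrt ((∑ i, ξ i ^ 2) + σ ^ 2) with hsdef
  have hsum_nonneg : (0:ℝ) ≤ ∑ i, ξ i ^ 2 := Finset.sum_nonneg fun i _ => sq_nonneg _
  have hs2 : s ^ 2 = (∑ i, ξ i ^ 2) + σ ^ 2 := Real.sq_sqrt (by positivity)
  have hspos : 0 < s := by
    apply Real.sqrt_pos.2
    positivity
  -- the unit point
  have hunit : ((t, x), (fun i => ξ i / s, σ / s)) ∈ K := by
    refine ⟨hpQB, ?_⟩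
    show (∑ i, (ξ i / s) ^ 2) + (σ / s) ^ 2 = 1
    have : ∀ i, (ξ i / s) ^ 2 = ξ i ^ 2 / s ^ 2 := fun i => div_pow _ _ _
    simp only [this, div_pow, ← Finset.sum_div]
    rw [← add_div, ← hs2, div_self (by positivity)]
  have hmin := hq₀min _ hunit
  -- scale back
  have hscaleQ : qSym a ψ t x ξ σ = s ^ 2 * qSym a ψ t x (fun i => ξ i / s) (σ / s) := by
    have h1 := qSym_scale a ψ t x s (fun i => ξ i / s) (σ / s)
    have h2 : (fun i => s * (ξ i / s)) = ξ := by
      funext i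
      field_simp
    have h3 : s * (σ / s) = σ := by field_simp
    rw [h2, h3] at h1
    exact h1
  have hscaleG : Gfun a ψ t x ξ σ = s ^ 2 * Gfun a ψ t x (fun i => ξ i / s) (σ / s) := by
    have h1 := Gfun_scale a ψ t x s (fun i => ξ i / s) (σ / s)
    have h2 : (fun i => s * (ξ i / s)) = ξ := by
      funext i
      field_simp
    have h3 : s * (σ / s) = σ := by field_simp
    rw [h2, h3] at h1
    exact h1
  -- lower bound on the symbol combination
  have hGunit := hGnonneg t x (fun i => ξ i / s) (σ / s)
  have hkey : c * ((∑ i, ξ i ^ 2) + σ ^ 2) ≤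
      qSym a ψ t x ξ σ + 4 * lam * Gfun a ψ t x ξ σ := by
    have hmin' : c ≤ qSym a ψ t x (fun i => ξ i / s) (σ / s)
        + (m₀:ℝ) * Gfun a ψ t x (fun i => ξ i / s) (σ / s) := hmin
    have h4lam : (m₀:ℝ) ≤ 4 * lam := by linarith
    have hstep : c ≤ qSym a ψ t x (fun i => ξ i / s) (σ / s)
        + 4 * lam * Gfun a ψ t x (fun i => ξ i / s) (σ / s) := by
      nlinarith
    have := mul_le_mul_of_nonneg_left hstep (le_of_lt (by positivity : (0:ℝ) < s ^ 2))
    rw [hscaleQ, hscaleG, ← hs2]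
    nlinarith
  -- conclude via the decomposition
  have hdec := qAlpha_decomp a ψ t x lam τ ξ
  rw [hdec]
  rw [← hφdef, ← hσdef]
  have hstep2 : lam * φ * (c * ((∑ i, ξ i ^ 2) + σ ^ 2)) ≤
      lam * φ * (qSym a ψ t x ξ σ + 4 * lam * Gfun a ψ t x ξ σ) :=
    mul_le_mul_of_nonneg_left hkey (by positivity)
  refine le_trans ?_ hstep2
  -- C * (|ξ|² + τ²φ²) ≤ lam φ c (|ξ|² + σ²)
  have hσ2 : σ ^ 2 = τ ^ 2 * lam ^ 2 * φ ^ 2 := by rw [hσdef]; ring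
  rw [hσ2]
  have hκlam2φ : κ ≤ lam ^ 2 * φ := by
    have t1 : 1 * φ ≤ lam * φ := mul_le_mul_of_nonneg_right hlam1 hφpos.le
    have t2 : lam ≤ lam ^ 2 := by nlinarith
    have t3 : lam * φ ≤ lam ^ 2 * φ := mul_le_mul_of_nonneg_right t2 hφpos.le
    linarith
  have hPnn : (0:ℝ) ≤ τ ^ 2 * φ ^ 2 := by positivity
  have i1 : κ * (∑ i, ξ i ^ 2) ≤ φ * (∑ i, ξ i ^ 2) :=
    mul_le_mul_of_nonneg_right hκφ hsum_nonneg
  have i2 : κ * (τ ^ 2 * φ ^ 2) ≤ lam ^ 2 * φ * (τ ^ 2 * φ ^ 2) :=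
    mul_le_mul_of_nonneg_right hκlam2φ hPnn
  have i3 := add_le_add i1 i2
  have hclam : (0:ℝ) ≤ c * lam := (mul_pos hc hlampos).le
  nlinarith [mul_le_mul_of_nonneg_left i3 hclam]
end
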